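/- Let q ≥ 1 be an integer and let B be a finite connected bipartite simple graph with bipartition (U, V) and at least one edge. Then the number of homomorphisms σ from B to J_q such that σ(u) ∈ {c'_1, …, c'_q} for every u ∈ U equals ∑_{f : U → [q]} 2^{n(f)}, where n(f) is the number of vertices v ∈ V such that f is constant on the neighbourhood of v in B. -/

import Mathlib

/-!
STATEMENT 9: For `q ≥ 1` and a finite connected bipartite simple graph `B` with
bipartition `(U, Uᶜ)` and at least one edge, the number of homomorphisms
`σ : B → J_q` mapping every vertex of `U` into `{c'_1, …, c'_q}` equals
`∑_{f : U → [q]} 2^{n(f)}`, where `n(f)` is the number of vertices `v` of the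
other side such that `f` is constant on the neighbourhood of `v`.
-/

/-- The vertex set of the tree `J_q`. -/
inductive JVert (q : ℕ) : Type
  | w : JVert q
  | c (i : Fin q) : JVert q
  | c' (i : Fin q) : JVert q

/-- The tree `J_q`, with edges `(c i, c' i)` and `(c' i, w)` for `i ∈ [q]`. -/
def Jgraph (q : ℕ) : SimpleGraph (JVert q) :=
  SimpleGraph.fromRel (fun a b =>
    (∃ i, a = JVert.c i ∧ b = JVert.c' i) ∨ (∃ i, a = JVert.c' i ∧ b = JVert.w))

/-- `JVert q` is equivalent to `Option (Fin q ⊕ Fin q)`. -/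
def jvertEquiv (q : ℕ) : JVert q ≃ Option (Fin q ⊕ Fin q) where
  toFun x := match x with
    | JVert.w => none
    | JVert.c i => some (Sum.inl i)
    | JVert.c' i => some (Sum.inr i)
  invFun x := match x with
    | none => JVert.w
    | some (Sum.inl i) => JVert.c i
    | some (Sum.inr i) => JVert.c' i
  left_inv x := by cases x <;> rfl
  right_inv x := by rcases x with _ | (i | i) <;> rfl

instance (q : ℕ) : Fintype (JVert q) := Fintype.ofEquiv _ (jvertEquiv q).symm

/-- Extract the index from a `c'` vertex. -/
def fOf {q : ℕ} (hq : 1 ≤ q) : JVert q → Fin q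
  | JVert.c' i => i
  | _ => ⟨0, hq⟩

lemma jadj {q : ℕ} (i : Fin q) (x : JVert q) :
    (Jgraph q).Adj (JVert.c' i) x ↔ x = JVert.w ∨ x = JVert.c i := by
  cases x <;> simp [Jgraph, SimpleGraph.fromRel_adj, eq_comm]

/-- Extensionality for sigma types whose fibers are subtypes of a fixed type. -/
lemma sigma_subtype_ext {ι X : Type*} {p : ι → X → Prop} :
    ∀ {a b : Σ i, {x : X // p i x}}, a.1 = b.1 → (a.2 : X) = (b.2 : X) → a = b := by
  rintro ⟨i, x, hx⟩ ⟨j, y, hy⟩ h1 h2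
  dsimp only at h1 h2
  subst h1
  subst h2
  rfl

open scoped Classical in
theorem stmt9 (q : ℕ) (hq : 1 ≤ q) {β : Type*} [Fintype β]
    (B : SimpleGraph β) (hconn : B.Connected)
    (hedge : ∃ a b : β, B.Adj a b)
    (U : Set β) (hbip : ∀ a b : β, B.Adj a b → (a ∈ U ↔ b ∉ U)) :
    Nat.card {σ : β → JVert q //
        (∀ a b : β, B.Adj a b → (Jgraph q).Adj (σ a) (σ b)) ∧
        ∀ u ∈ U, ∃ i : Fin q, σ u = JVert.c' i}
      = ∑ f : ↥U → Fin q,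
          2 ^ Nat.card {v : ↥(Uᶜ) // ∀ u₁ u₂ : ↥U,
              B.Adj ↑u₁ ↑v → B.Adj ↑u₂ ↑v → f u₁ = f u₂} := by
  classical
  -- every vertex has a neighbour
  have hnb : ∀ v : β, ∃ x, B.Adj v x := by
    intro v
    obtain ⟨a, b, hab⟩ := hedge
    by_cases hv : v = a
    · exact ⟨b, hv ▸ hab⟩
    · obtain ⟨p⟩ := hconn.preconnected v a
      cases p with
      | nil => exact absurd rfl hv
      | cons h _ => exact ⟨_, h⟩
  -- every vertex of Uᶜ has a neighbour in U
  have hnbU : ∀ v : ↥(Uᶜ), ∃ u : ↥U, B.Adj ↑u ↑v := by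
    intro v
    obtain ⟨x, hx⟩ := hnb ↑v
    have hxU : x ∈ U := by
      have h := hbip (↑v) x hx
      have hv : (↑v : β) ∉ U := v.2
      by_contra hxn
      exact hv (h.mpr hxn)
    exact ⟨⟨x, hxU⟩, hx.symm⟩
  -- the big equivalence
  have e : {σ : β → JVert q //
        (∀ a b : β, B.Adj a b → (Jgraph q).Adj (σ a) (σ b)) ∧
        ∀ u ∈ U, ∃ i : Fin q, σ u = JVert.c' i} ≃
       Σ f : ↥U → Fin q, {τ : ↥(Uᶜ) → JVert q // ∀ v : ↥(Uᶜ),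
        ∀ u : ↥U, B.Adj ↑u ↑v → (τ v = JVert.w ∨ τ v = JVert.c (f u))} := by
    refine
      { toFun := fun σh => ⟨fun u => fOf hq (σh.1 ↑u), ⟨fun v => σh.1 ↑v, ?_⟩⟩
        invFun := fun p =>
          ⟨fun a => if ha : a ∈ U then JVert.c' (p.1 ⟨a, ha⟩) else p.2.1 ⟨a, ha⟩, ?_, ?_⟩
        left_inv := ?_
        right_inv := ?_ }
    · -- toFun property
      intro v u hu
      obtain ⟨i, hi⟩ := σh.2.2 ↑u u.2
      have hadj := σh.2.1 ↑u ↑v hu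
      rw [hi] at hadj
      show σh.1 ↑v = JVert.w ∨ σh.1 ↑v = JVert.c (fOf hq (σh.1 ↑u))
      rw [hi]
      exact (jadj i _).mp hadj
    · -- invFun is a homomorphism
      intro a b hab
      by_cases ha : a ∈ U
      · have hb : b ∉ U := (hbip a b hab).mp ha
        simp only [dif_pos ha, dif_neg hb]
        exact (jadj _ _).mpr (p.2.2 ⟨b, hb⟩ ⟨a, ha⟩ hab)
      · have hb : b ∈ U := by
          by_contra hbn
          exact ha ((hbip a b hab).mpr hbn)
        simp only [dif_neg ha, dif_pos hb]
        exact ((jadj _ _).mpr (p.2.2 ⟨a, ha⟩ ⟨b, hb⟩ hab.symm)).symm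
    · -- invFun maps U to c'
      intro u hu
      exact ⟨p.1 ⟨u, hu⟩, dif_pos hu⟩
    · -- left inverse
      rintro ⟨σ, hhom, hU⟩
      apply Subtype.ext
      funext a
      by_cases ha : a ∈ U
      · obtain ⟨i, hi⟩ := hU a ha
        simp only [dif_pos ha, hi]
        rfl
      · simp only [dif_neg ha]
    · -- right inverse
      rintro ⟨f, τ, hτ⟩
      refine sigma_subtype_ext ?_ ?_
      · funext u
        show fOf hq (if ha : (↑u : β) ∈ U then JVert.c' (f ⟨↑u, ha⟩) else τ ⟨↑u, ha⟩) = f u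
        simp only [dif_pos u.2]
        rfl
      · funext v
        show (if ha : (↑v : β) ∈ U then JVert.c' (f ⟨↑v, ha⟩) else τ ⟨↑v, ha⟩) = τ v
        simp only [dif_neg (v.2 : (↑v : β) ∉ U)]
  rw [Nat.card_congr e]
  haveI : ∀ f : ↥U → Fin q, Fintype {τ : ↥(Uᶜ) → JVert q // ∀ v : ↥(Uᶜ),
      ∀ u : ↥U, B.Adj ↑u ↑v → (τ v = JVert.w ∨ τ v = JVert.c (f u))} :=
    fun f => Fintype.ofFinite _
  rw [Nat.card_eq_fintype_card, Fintype.card_sigma]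
  refine Finset.sum_congr rfl fun f _ => ?_
  rw [← Nat.card_eq_fintype_card]
  have e2 : {τ : ↥(Uᶜ) → JVert q // ∀ v : ↥(Uᶜ),
        ∀ u : ↥U, B.Adj ↑u ↑v → (τ v = JVert.w ∨ τ v = JVert.c (f u))} ≃
      ∀ v : ↥(Uᶜ),
        {x : JVert q // ∀ u : ↥U, B.Adj ↑u ↑v → (x = JVert.w ∨ x = JVert.c (f u))} :=
    Equiv.subtypePiEquivPi (p := fun (v : ↥(Uᶜ)) (x : JVert q) =>
      ∀ u : ↥U, B.Adj ↑u ↑v → (x = JVert.w ∨ x = JVert.c (f u)))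
  rw [Nat.card_congr e2, Nat.card_pi]
  have hcard : ∀ v : ↥(Uᶜ),
      Nat.card {x : JVert q // ∀ u : ↥U, B.Adj ↑u ↑v → (x = JVert.w ∨ x = JVert.c (f u))}
        = if (∀ u₁ u₂ : ↥U, B.Adj ↑u₁ ↑v → B.Adj ↑u₂ ↑v → f u₁ = f u₂) then 2 else 1 := by
    intro v
    obtain ⟨u₀, hu₀⟩ := hnbU v
    by_cases hc : ∀ u₁ u₂ : ↥U, B.Adj ↑u₁ ↑v → B.Adj ↑u₂ ↑v → f u₁ = f u₂
    · rw [if_pos hc]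
      have hset : {x : JVert q | ∀ u : ↥U, B.Adj ↑u ↑v → (x = JVert.w ∨ x = JVert.c (f u))}
          = {JVert.w, JVert.c (f u₀)} := by
        ext x
        constructor
        · intro h
          exact h u₀ hu₀
        · rintro (rfl | rfl) u hu
          · exact Or.inl rfl
          · exact Or.inr (by rw [hc u u₀ hu hu₀])
      change Nat.card {x : JVert q | ∀ u : ↥U,
        B.Adj ↑u ↑v → (x = JVert.w ∨ x = JVert.c (f u))} = 2
      rw [Nat.card_coe_set_eq, hset, Set.ncard_pair (fun h => by cases h)]
    · rw [if_neg hc]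
      push_neg at hc
      obtain ⟨u₁, u₂, h₁, h₂, hne⟩ := hc
      have hset : {x : JVert q | ∀ u : ↥U, B.Adj ↑u ↑v → (x = JVert.w ∨ x = JVert.c (f u))}
          = {JVert.w} := by
        ext x
        constructor
        · intro h
          rcases h u₁ h₁ with rfl | rfl
          · rfl
          · rcases h u₂ h₂ with h' | h'
            · exact absurd h' (fun h' => by cases h')
            · exact absurd (JVert.c.inj h') hne
        · rintro rfl u hu
          exact Or.inl rfl
      change Nat.card {x : JVert q | ∀ u : ↥U,
        B.Adj ↑u ↑v → (x = JVert.w ∨ x = JVert.c (f u))} = 1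
      rw [Nat.card_coe_set_eq, hset, Set.ncard_singleton]
  calc ∏ v : ↥(Uᶜ), Nat.card {x : JVert q // ∀ u : ↥U,
          B.Adj ↑u ↑v → (x = JVert.w ∨ x = JVert.c (f u))}
      = ∏ v : ↥(Uᶜ), (if (∀ u₁ u₂ : ↥U, B.Adj ↑u₁ ↑v → B.Adj ↑u₂ ↑v → f u₁ = f u₂)
          then 2 else 1) := Finset.prod_congr rfl fun v _ => hcard v
    _ = 2 ^ (Finset.univ.filter (fun v : ↥(Uᶜ) =>
          ∀ u₁ u₂ : ↥U, B.Adj ↑u₁ ↑v → B.Adj ↑u₂ ↑v → f u₁ = f u₂)).card := by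
        rw [Finset.prod_ite, Finset.prod_const, Finset.prod_const, one_pow, mul_one]
    _ = 2 ^ Nat.card {v : ↥(Uᶜ) // ∀ u₁ u₂ : ↥U,
          B.Adj ↑u₁ ↑v → B.Adj ↑u₂ ↑v → f u₁ = f u₂} := by
        rw [Nat.card_eq_fintype_card, Fintype.card_subtype]
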